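/- Elastic Net duality gap: for the problem min_α ℓ(Aα) + λ((η/2)‖α‖₂² + (1-η)‖α‖₁) with ℓ convex differentiable, λ > 0, η ∈ (0,1], and w = ∇ℓ(Aα), the duality gap equals G(α) = ⟨w, Aα⟩ + (1/(2ηλ))·Σᵢ ( max{0, |A_{:i}ᵀ w| - (1-η)λ} )² + λ((η/2)‖α‖₂² + (1-η)‖α‖₁). -/

import Mathlib

open scoped BigOperators ENNReal
open MeasureTheory

noncomputable section

abbrev Euc (n : ℕ) := EuclideanSpace ℝ (Fin n)

/-- `N` is a norm on `ℝ^n`. -/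
def IsNorm {n : ℕ} (N : Euc n → ℝ) : Prop :=
  (∀ x, 0 ≤ N x) ∧ (∀ x, N x = 0 ↔ x = 0) ∧
  (∀ (c : ℝ) (x), N (c • x) = |c| * N x) ∧
  (∀ x y, N (x + y) ≤ N x + N y)

/-- The dual norm `‖v‖_* = sup_{N u ≤ 1} ⟨v,u⟩`. -/
noncomputable def dualNorm {n : ℕ} (N : Euc n → ℝ) (v : Euc n) : ℝ :=
  sSup {r : ℝ | ∃ u, N u ≤ 1 ∧ r = (inner ℝ v u : ℝ)}

/-- Convex (Fenchel) conjugate of an `ℝ ∪ {+∞}`-valued function. -/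
noncomputable def econj {n : ℕ} (g : Euc n → EReal) (v : Euc n) : EReal :=
  ⨆ u : Euc n, ((inner ℝ v u : ℝ) : EReal) - g u

/-- Properness: never `-∞`, finite somewhere. -/
def EProper {n : ℕ} (g : Euc n → EReal) : Prop :=
  (∀ x, g x ≠ ⊥) ∧ ∃ x, g x ≠ ⊤

/-- Convexity of an extended-real-valued function. -/
def EConvex {n : ℕ} (g : Euc n → EReal) : Prop :=
  ∀ x y (a b : ℝ), 0 ≤ a → 0 ≤ b → a + b = 1 →
    g (a • x + b • y) ≤ (a : EReal) * g x + (b : EReal) * g y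

/-- `u` is a subgradient of `g` at `x`. -/
def ESubgradAt {n : ℕ} (g : Euc n → EReal) (x u : Euc n) : Prop :=
  ∀ y, g x + ((inner ℝ u (y - x) : ℝ) : EReal) ≤ g y

/-- `u` is a subgradient of a real-valued `f` at `x`. -/
def RSubgradAt {n : ℕ} (f : Euc n → ℝ) (x u : Euc n) : Prop :=
  ∀ y, f x + (inner ℝ u (y - x) : ℝ) ≤ f y

/-- One-dimensional convex conjugate. -/
noncomputable def econj1 (g : ℝ → EReal) (x : ℝ) : EReal :=
  ⨆ a : ℝ, ((x * a : ℝ) : EReal) - g a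

def EProper1 (g : ℝ → EReal) : Prop := (∀ x, g x ≠ ⊥) ∧ ∃ x, g x ≠ ⊤

def EConvex1 (g : ℝ → EReal) : Prop :=
  ∀ x y (a b : ℝ), 0 ≤ a → 0 ≤ b → a + b = 1 →
    g (a * x + b * y) ≤ (a : EReal) * g x + (b : EReal) * g y

def ESubgradAt1 (g : ℝ → EReal) (x u : ℝ) : Prop :=
  ∀ y, g x + ((u * (y - x) : ℝ) : EReal) ≤ g y

/-- Map a nonnegative extended real to `ℝ≥0∞` (junk on negatives). -/
noncomputable def toe (x : EReal) : ℝ≥0∞ :=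
  if x = ⊤ then ⊤ else ENNReal.ofReal x.toReal

lemma econj_eq_of_max {n : ℕ} (g : Euc n → ℝ) (v u₀ : Euc n)
    (h : ∀ u, (inner ℝ v u : ℝ) - g u ≤ (inner ℝ v u₀ : ℝ) - g u₀) :
    econj (fun u => ((g u : ℝ) : EReal)) v = (((inner ℝ v u₀ : ℝ) - g u₀ : ℝ) : EReal) := by
  unfold econj
  apply le_antisymm
  · exact iSup_le fun u => by rw [← EReal.coe_sub]; exact_mod_cast h u
  · have := le_iSup (fun u => ((inner ℝ v u : ℝ) : EReal) - ((g u : ℝ) : EReal)) u₀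
    rw [EReal.coe_sub]; exact this

lemma grad_ineq {d : ℕ} {ℓ : Euc d → ℝ} (hconv : ConvexOn ℝ Set.univ ℓ)
    {x w : Euc d} (hg : HasGradientAt ℓ w x) (y : Euc d) :
    ℓ x + (inner ℝ w (y - x) : ℝ) ≤ ℓ y := by
  set c : ℝ → Euc d := fun t => x + t • (y - x) with hc
  have hcd : HasDerivAt c (y - x) 0 := by
    have : HasDerivAt (fun t : ℝ => t • (y - x)) (y - x) 0 := by
      simpa using (hasDerivAt_id (0:ℝ)).smul_const (y - x)
    simpa [hc] using this.const_add x
  have hF : HasFDerivAt ℓ (InnerProductSpace.toDual ℝ _ w) x := (hasGradientAt_iff_hasFDerivAt).mp hg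
  have hc0 : c 0 = x := by simp [hc]
  have hφ : HasDerivAt (fun t => ℓ (c t)) ((inner ℝ w (y - x) : ℝ)) 0 := by
    have hF' : HasFDerivAt ℓ (InnerProductSpace.toDual ℝ _ w) (c 0) := by rwa [hc0]
    have := hF'.comp_hasDerivAt 0 hcd
    simp at this; exact this
  -- slope bound
  have hslope : ∀ t ∈ Set.Ioc (0:ℝ) 1, slope (fun t => ℓ (c t)) 0 t ≤ ℓ y - ℓ x := by
    intro t ht
    have hconv' := hconv.2 (Set.mem_univ x) (Set.mem_univ y) (by linarith [ht.2] : (0:ℝ) ≤ 1 - t) (le_of_lt ht.1) (by ring)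
    have hct : c t = (1 - t) • x + t • y := by
      simp only [hc]; module
    simp only [smul_eq_mul] at hconv'
    rw [slope_def_field, hc0, hct, sub_zero, div_le_iff₀ ht.1]
    nlinarith [hconv']
  have htend : Filter.Tendsto (slope (fun t => ℓ (c t)) 0) (nhdsWithin 0 (Set.Ioi 0)) (nhds ((inner ℝ w (y - x) : ℝ))) :=
    ((hasDerivAt_iff_tendsto_slope).mp hφ).mono_left (nhdsWithin_mono _ (by intro t ht; exact ne_of_gt ht))
  have hle : (inner ℝ w (y - x) : ℝ) ≤ ℓ y - ℓ x := by
    refine le_of_tendsto htend ?_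
    filter_upwards [Ioc_mem_nhdsGT_of_mem (by simp : (0:ℝ) ∈ Set.Ico 0 1)] with t ht
    exact hslope t ht
  linarith

lemma coord_le (c k : ℝ) (hc : 0 ≤ c) (hk : 0 < k) (v t : ℝ) :
    v * t - k / 2 * t ^ 2 - c * |t| ≤ (max 0 (|v| - c)) ^ 2 / (2 * k) := by
  set m := max 0 (|v| - c) with hm
  have h1 : 0 ≤ m := le_max_left _ _
  have h2 : |v| - c ≤ m := le_max_right _ _
  have h3 : v * t ≤ |v| * |t| := by
    calc v * t ≤ |v * t| := le_abs_self _
      _ = |v| * |t| := abs_mul v t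
  have h4 : |t| ^ 2 = t ^ 2 := sq_abs t
  have h5 : 0 ≤ (m - k * |t|) ^ 2 := sq_nonneg _
  have h6 : 0 ≤ |t| := abs_nonneg t
  rw [le_div_iff₀ (by positivity : (0:ℝ) < 2 * k)]
  have A : 2*k*(v*t) ≤ 2*k*(|v| * |t|) := by nlinarith
  have B : 2*k*((|v| - c) * |t|) ≤ 2*k*(m * |t|) := by
    nlinarith [mul_le_mul_of_nonneg_right h2 h6]
  have C : 0 ≤ m^2 - 2*k*(m * |t|) + k^2*t^2 := by nlinarith [sq_nonneg (m - k * |t|)]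
  nlinarith [A, B, C]

lemma coord_eq (c k : ℝ) (hc : 0 ≤ c) (hk : 0 < k) (v : ℝ) :
    v * ((if 0 ≤ v then max 0 (|v| - c) else -(max 0 (|v| - c))) / k)
      - k / 2 * ((if 0 ≤ v then max 0 (|v| - c) else -(max 0 (|v| - c))) / k) ^ 2
      - c * |(if 0 ≤ v then max 0 (|v| - c) else -(max 0 (|v| - c))) / k|
    = (max 0 (|v| - c)) ^ 2 / (2 * k) := by
  set m := max 0 (|v| - c) with hm
  have h1 : 0 ≤ m := le_max_left _ _
  set s := (if 0 ≤ v then m else -m) with hs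
  have habs : |s / k| = m / k := by
    rcases le_or_gt 0 v with h | h
    · rw [hs, if_pos h, abs_div, abs_of_pos hk, abs_of_nonneg h1]
    · rw [hs, if_neg (not_le.mpr h), abs_div, abs_of_pos hk, abs_neg, abs_of_nonneg h1]
  have hss : s ^ 2 = m ^ 2 := by
    rcases le_or_gt 0 v with h | h
    · rw [hs, if_pos h]
    · rw [hs, if_neg (not_le.mpr h), neg_sq]
  have hvs : v * (s / k) = |v| * m / k := by
    rcases le_or_gt 0 v with h | h
    · simp [hs, h, abs_of_nonneg h, mul_div_assoc]
    · simp only [hs, if_neg (not_le.mpr h), abs_of_neg h]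
      ring
  have hvm : |v| * m = (m + c) * m := by
    rcases le_or_gt (|v|) c with h | h
    · have : m = 0 := by simp [hm, sub_nonpos.mpr h]
      simp [this]
    · have : m = |v| - c := by simp [hm, max_eq_right (by linarith : (0:ℝ) ≤ |v| - c)]
      rw [this]; ring
  rw [habs, hvs, hvm, div_pow, hss]
  field_simp
  ring


/-- Elastic Net duality gap: for `D(α) = ℓ(Aα) + λ((η/2)‖α‖₂² + (1-η)‖α‖₁)`
and `w = ∇ℓ(Aα)`, the duality gap `G(α) = P(w) + D(α)` equals
`⟨w, Aα⟩ + (1/(2ηλ)) Σᵢ (max{0, |A_{:i}ᵀw| - (1-η)λ})² + λ((η/2)‖α‖₂² + (1-η)‖α‖₁)`. -/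
theorem stmt16 {d n : ℕ} (A : Euc n →L[ℝ] Euc d)
    (ℓ : Euc d → ℝ) (hconv : ConvexOn ℝ Set.univ ℓ)
    (ℓ' : Euc d → Euc d) (hgrad : ∀ x, HasGradientAt ℓ (ℓ' x) x)
    (lam η : ℝ) (hlam : 0 < lam) (hη : 0 < η) (hη1 : η ≤ 1)
    (α : Euc n) :
    (econj (fun v => (ℓ v : EReal)) (ℓ' (A α))
        + econj (fun b : Euc n =>
            ((lam * (η / 2 * ∑ i, (b i) ^ 2 + (1 - η) * ∑ i, |b i|) : ℝ) : EReal))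
          (-(ContinuousLinearMap.adjoint A) (ℓ' (A α))))
      + (((ℓ (A α) : ℝ) : EReal)
        + ((lam * (η / 2 * ∑ i, (α i) ^ 2 + (1 - η) * ∑ i, |α i|) : ℝ) : EReal))
    = (((inner ℝ (ℓ' (A α)) (A α) : ℝ)
        + 1 / (2 * η * lam)
            * ∑ i, (max 0 (|(ContinuousLinearMap.adjoint A) (ℓ' (A α)) i|
                - (1 - η) * lam)) ^ 2
        + lam * (η / 2 * ∑ i, (α i) ^ 2 + (1 - η) * ∑ i, |α i|) : ℝ) : EReal) := by
  set w : Euc d := ℓ' (A α) with hw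
  set v : Euc n := -(ContinuousLinearMap.adjoint A) w with hv
  set c : ℝ := (1 - η) * lam with hcc
  set k : ℝ := η * lam with hkk
  have hc : 0 ≤ c := mul_nonneg (by linarith) hlam.le
  have hk : 0 < k := mul_pos hη hlam
  -- first conjugate
  have h1 : econj (fun v => (ℓ v : EReal)) w
      = (((inner ℝ w (A α) : ℝ) - ℓ (A α) : ℝ) : EReal) := by
    apply econj_eq_of_max
    intro u
    have := grad_ineq hconv (hgrad (A α)) u
    rw [inner_sub_right] at this
    linarith
  -- second conjugate
  have hsep : ∀ u : Euc n,
      (inner ℝ v u : ℝ) - lam * (η / 2 * ∑ i, (u i) ^ 2 + (1 - η) * ∑ i, |u i|)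
        = ∑ i, (v i * u i - k / 2 * (u i) ^ 2 - c * |u i|) := by
    intro u
    rw [real_inner_comm]
    simp only [PiLp.inner_apply, RCLike.inner_apply, conj_trivial, hkk, hcc,
      Finset.sum_sub_distrib, ← Finset.mul_sum]
    ring
  set b₀ : Euc n := WithLp.toLp 2 (fun i => (if 0 ≤ v i then max 0 (|v i| - c) else -(max 0 (|v i| - c))) / k) with hb₀
  have hb₀i : ∀ i, b₀ i = (if 0 ≤ v i then max 0 (|v i| - c) else -(max 0 (|v i| - c))) / k :=
    fun i => rfl
  have hat : (inner ℝ v b₀ : ℝ) - lam * (η / 2 * ∑ i, (b₀ i) ^ 2 + (1 - η) * ∑ i, |b₀ i|)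
      = ∑ i, (max 0 (|v i| - c)) ^ 2 / (2 * k) := by
    rw [hsep]
    exact Finset.sum_congr rfl fun i _ => by rw [hb₀i]; exact coord_eq c k hc hk (v i)
  have h2 : econj (fun b : Euc n =>
        ((lam * (η / 2 * ∑ i, (b i) ^ 2 + (1 - η) * ∑ i, |b i|) : ℝ) : EReal)) v
      = ((∑ i, (max 0 (|v i| - c)) ^ 2 / (2 * k) : ℝ) : EReal) := by
    have := econj_eq_of_max
      (fun b : Euc n => lam * (η / 2 * ∑ i, (b i) ^ 2 + (1 - η) * ∑ i, |b i|)) v b₀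
      (fun u => by
        rw [hsep, hsep]
        calc ∑ i, (v i * u i - k / 2 * (u i) ^ 2 - c * |u i|)
            ≤ ∑ i, (max 0 (|v i| - c)) ^ 2 / (2 * k) :=
              Finset.sum_le_sum fun i _ => coord_le c k hc hk (v i) (u i)
          _ = ∑ i, (v i * b₀ i - k / 2 * (b₀ i) ^ 2 - c * |b₀ i|) :=
              (Finset.sum_congr rfl fun i _ => by
                rw [hb₀i]; exact coord_eq c k hc hk (v i)).symm)
    rw [this, hat]
  rw [h1, h2]
  have hvi : ∀ i, |v i| = |(ContinuousLinearMap.adjoint A) w i| := by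
    intro i
    rw [hv]
    simp [abs_neg]
  norm_cast
  simp only [hvi, hcc]
  rw [← Finset.sum_div]
  field_simp
  rw [hkk]; ring
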